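/- Let X be an Archimedean vector lattice and let ρ be an order continuous Riesz pseudonorm on X. If (x_α) is a net in X with 0 ≤ x_α, (x_α) increasing, and x_α ≤ x for all α and some x ∈ X, then (x_α) is ρ-Cauchy: for every ε > 0 there exists α₀ such that ρ(|x_α − x_β|) < ε for all α, β ≥ α₀. -/

import Mathlib

open Filter Topology

/-- A net `x : ι → X` order converges to `x₀`: there is a decreasing net (equivalently, a
downward-directed set `D`) with infimum `0` such that for every member `d` of it, eventually
`|x α - x₀| ≤ d`. -/
def OrderConvNet {X : Type*} [Lattice X] [AddCommGroup X]
    {ι : Type*} [Preorder ι] (x : ι → X) (x₀ : X) : Prop :=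
  ∃ D : Set X, D.Nonempty ∧ DirectedOn (· ≥ ·) D ∧ IsGLB D 0 ∧
    ∀ d ∈ D, ∃ α₀ : ι, ∀ α : ι, α₀ ≤ α → |x α - x₀| ≤ d

universe u

/-- In an Archimedean vector lattice with an order continuous Riesz
pseudonorm `ρ`, every increasing net of positive elements which is bounded above is
`ρ`-Cauchy. -/
theorem stmt_13 {X : Type*} [Lattice X] [AddCommGroup X] [Module ℝ X]
    [CovariantClass X X (· + ·) (· ≤ ·)] [PosSMulMono ℝ X]
    (harch : ∀ z y : X, (∀ n : ℕ, 0 ≤ n • z ∧ n • z ≤ y) → z = 0)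
    (ρ : X → ℝ)
    (hnonneg : ∀ x : X, 0 ≤ ρ x)
    (hsub : ∀ x y : X, ρ (x + y) ≤ ρ x + ρ y)
    (htend : ∀ x : X, Tendsto (fun θ : ℝ => ρ (θ • x)) (𝓝 0) (𝓝 0))
    (hmono : ∀ x y : X, |x| ≤ |y| → ρ x ≤ ρ y)
    (hoc : ∀ {ι : Type u} [Nonempty ι] [Preorder ι] [IsDirected ι (· ≤ ·)]
      (x : ι → X) (x₀ : X), OrderConvNet x x₀ →
        Tendsto (fun α => ρ (x α - x₀)) atTop (𝓝 0))
    {ι : Type u} [Nonempty ι] [Preorder ι] [IsDirected ι (· ≤ ·)]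
    (xs : ι → X) (hpos : ∀ α, 0 ≤ xs α) (hmon : Monotone xs)
    (x : X) (hub : ∀ α, xs α ≤ x) :
    ∀ ε : ℝ, 0 < ε → ∃ α₀ : ι, ∀ α, α₀ ≤ α → ∀ β, α₀ ≤ β → ρ |xs α - xs β| < ε := by
  intro ε hε
  classical
  set Y : Set X := upperBounds (Set.range xs) with hY
  set D : Set X := {d | ∃ y ∈ Y, ∃ γ : ι, d = y - xs γ} with hD
  obtain ⟨γ₀⟩ := ‹Nonempty ι›
  have hxY : x ∈ Y := by
    rintro z ⟨α, rfl⟩; exact hub α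
  have hDnonneg : ∀ d ∈ D, 0 ≤ d := by
    rintro d ⟨y, hy, γ, rfl⟩
    have : xs γ ≤ y := hy ⟨γ, rfl⟩
    simpa using sub_nonneg.2 this
  -- infimum of D is 0, via the Archimedean property
  have hglb : IsGLB D 0 := by
    constructor
    · intro d hd; exact hDnonneg d hd
    · intro z hz
      set p : X := z ⊔ 0 with hp
      have hYn : ∀ n : ℕ, (x - n • p) ∈ Y := by
        intro n
        induction n with
        | zero => simpa using hxY
        | succ n ih =>
          rintro w ⟨β, rfl⟩
          have hdD : (x - n • p) - xs β ∈ D := ⟨x - n • p, ih, β, rfl⟩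
          have h1 : z ≤ (x - n • p) - xs β := hz hdD
          have h2 : (0 : X) ≤ (x - n • p) - xs β := hDnonneg _ hdD
          have hple : p ≤ (x - n • p) - xs β := sup_le h1 h2
          have h3 : xs β + p ≤ x - n • p := by
            calc xs β + p = p + xs β := add_comm _ _
              _ ≤ (x - n • p - xs β) + xs β := add_le_add_left hple (xs β)
              _ = x - n • p := by abel
          have : xs β ≤ x - n • p - p := by
            calc xs β = xs β + p - p := by abel
              _ ≤ x - n • p - p := sub_le_sub_right h3 _
          calc xs β ≤ x - n • p - p := this
            _ = x - (n + 1) • p := by rw [succ_nsmul]; abel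
      have hp0 : p = 0 := by
        refine harch p (x - xs γ₀) (fun n => ⟨?_, ?_⟩)
        · -- 0 ≤ n • p
          induction n with
          | zero => simp
          | succ n ih =>
            have hp' : (0 : X) ≤ p := le_sup_right
            calc (0 : X) ≤ n • p := ih
              _ ≤ n • p + p := le_add_of_nonneg_right hp'
              _ = (n + 1) • p := (succ_nsmul p n).symm
        · have := hYn n ⟨γ₀, rfl⟩
          -- xs γ₀ ≤ x - n • p
          have h4 : n • p + xs γ₀ ≤ x := by
            have := add_le_add_right this (n • p)
            calc n • p + xs γ₀ = xs γ₀ + n • p := add_comm _ _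
              _ ≤ (x - n • p) + n • p := add_le_add_left ‹xs γ₀ ≤ x - n • p› _
              _ = x := by abel
          calc n • p = (n • p + xs γ₀) - xs γ₀ := by abel
            _ ≤ x - xs γ₀ := sub_le_sub_right h4 _
      calc z ≤ p := le_sup_left
        _ = 0 := hp0
  -- directedness of D downward
  have hdir : DirectedOn (· ≥ ·) D := by
    rintro d₁ ⟨y₁, hy₁, γ₁, rfl⟩ d₂ ⟨y₂, hy₂, γ₂, rfl⟩
    obtain ⟨γ₃, h13, h23⟩ := directed_of (· ≤ ·) γ₁ γ₂
    have hyY : y₁ ⊓ y₂ ∈ Y := fun w hw => le_inf (hy₁ hw) (hy₂ hw)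
    refine ⟨y₁ ⊓ y₂ - xs γ₃, ⟨y₁ ⊓ y₂, hyY, γ₃, rfl⟩, ?_, ?_⟩
    · exact sub_le_sub inf_le_left (hmon h13)
    · exact sub_le_sub inf_le_right (hmon h23)
  -- the double net (α, β) ↦ xs α - xs β order converges to 0
  haveI : IsDirected (ι × ι) (· ≤ ·) := by
    constructor
    rintro ⟨a₁, a₂⟩ ⟨b₁, b₂⟩
    obtain ⟨c₁, h₁, h₁'⟩ := directed_of (· ≤ ·) a₁ b₁
    obtain ⟨c₂, h₂, h₂'⟩ := directed_of (· ≤ ·) a₂ b₂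
    exact ⟨(c₁, c₂), ⟨h₁, h₂⟩, ⟨h₁', h₂'⟩⟩
  have hconv : OrderConvNet (fun p : ι × ι => xs p.1 - xs p.2) 0 := by
    refine ⟨D, ⟨x - xs γ₀, x, hxY, γ₀, rfl⟩, hdir, hglb, ?_⟩
    rintro d ⟨y, hy, γ, rfl⟩
    refine ⟨(γ, γ), ?_⟩
    rintro ⟨α, β⟩ ⟨(hγα : γ ≤ α), (hγβ : γ ≤ β)⟩
    have h1 : xs α - xs β ≤ y - xs γ :=
      sub_le_sub (hy ⟨α, rfl⟩) (hmon hγβ)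
    have h2 : -(xs α - xs β) ≤ y - xs γ := by
      have : xs β - xs α ≤ y - xs γ := sub_le_sub (hy ⟨β, rfl⟩) (hmon hγα)
      simpa [neg_sub] using this
    simpa using abs_le'.2 ⟨h1, h2⟩
  have hT := hoc (fun p : ι × ι => xs p.1 - xs p.2) 0 hconv
  simp only [sub_zero] at hT
  have h2 : ∀ᶠ p in (atTop : Filter (ι × ι)), ρ (xs p.1 - xs p.2) < ε :=
    hT.eventually_lt_const hε
  rw [eventually_atTop] at h2
  obtain ⟨⟨a, b⟩, hab⟩ := h2
  obtain ⟨α₀, ha, hb⟩ := directed_of (· ≤ ·) a b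
  refine ⟨α₀, fun α hα β hβ => ?_⟩
  have hρ : ρ (xs α - xs β) < ε := hab (α, β) ⟨le_trans ha hα, le_trans hb hβ⟩
  have : ρ |xs α - xs β| ≤ ρ (xs α - xs β) := hmono _ _ (by rw [abs_abs])
  linarith
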